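/- For any modified continued fraction ω = ⟨(a_j:ε_j)⟩_{j=1}^n of height n ≥ 1 and any complex z with |z| ≤ 1, both |μ_ω(z)| and |arg(ε_1·μ_ω(z))| are at most 1/(a_1 − 1). -/

import Mathlib

/-- One step of the recursion `(x_{j-2}, x_{j-1}) ↦ (x_{j-1}, a_j x_{j-1} + ε_j x_{j-2})`. -/
def mcfStep (st : ℤ × ℤ) (t : ℤ × ℤ) : ℤ × ℤ := (st.2, t.1 * st.2 + t.2 * st.1)

/-- `(p_{n-1}, p_n)` for the modified continued fraction `ω`. -/
def pPair (ω : List (ℤ × ℤ)) : ℤ × ℤ := ω.foldl mcfStep (1, 0)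

/-- `(q_{n-1}, q_n)` for the modified continued fraction `ω`. -/
def qPair (ω : List (ℤ × ℤ)) : ℤ × ℤ := ω.foldl mcfStep (0, 1)

/-- `p_n(ω)` -/
def mcfp (ω : List (ℤ × ℤ)) : ℤ := (pPair ω).2
/-- `p_{n-1}(ω)` -/
def mcfp' (ω : List (ℤ × ℤ)) : ℤ := (pPair ω).1
/-- `q_n(ω)` -/
def mcfq (ω : List (ℤ × ℤ)) : ℤ := (qPair ω).2
/-- `q_{n-1}(ω)` -/
def mcfq' (ω : List (ℤ × ℤ)) : ℤ := (qPair ω).1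

/-- The signature `ℰ(ω) = (-1)^n ∏ ε_j`. -/
def sig (ω : List (ℤ × ℤ)) : ℤ := (-1) ^ ω.length * (ω.map Prod.snd).prod

/-- `ω` is a modified continued fraction: entries `a_j ≥ 2` and `ε_j = ±1`. -/
def IsMCF (ω : List (ℤ × ℤ)) : Prop := ∀ t ∈ ω, 2 ≤ t.1 ∧ (t.2 = 1 ∨ t.2 = -1)

/-- The Möbius transformation `μ_ω(z) = (p_n + ℰ(ω) z p_{n-1})/(q_n + ℰ(ω) z q_{n-1})`. -/
noncomputable def mu (ω : List (ℤ × ℤ)) (z : ℂ) : ℂ :=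
  ((mcfp ω : ℂ) + (sig ω : ℂ) * z * (mcfp' ω : ℂ)) /
  ((mcfq ω : ℂ) + (sig ω : ℂ) * z * (mcfq' ω : ℂ))

/-- Denominator of `μ_ω` at `z`. -/
noncomputable def muDen (ω : List (ℤ × ℤ)) (z : ℂ) : ℂ :=
  (mcfq ω : ℂ) + (sig ω : ℂ) * z * (mcfq' ω : ℂ)

-- auxiliary
noncomputable def muNum (ω : List (ℤ × ℤ)) (z : ℂ) : ℂ :=
  (mcfp ω : ℂ) + (sig ω : ℂ) * z * (mcfp' ω : ℂ)

lemma mu_eq (ω : List (ℤ × ℤ)) (z : ℂ) : mu ω z = muNum ω z / muDen ω z := rfl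

lemma foldl_mcfStep (t : List (ℤ × ℤ)) : ∀ b c : ℤ,
    t.foldl mcfStep (b, c) =
      (b * (pPair t).1 + c * (qPair t).1, b * (pPair t).2 + c * (qPair t).2) := by
  induction t with
  | nil => intro b c; simp [pPair, qPair]
  | cons hd tl ih =>
    intro b c
    simp only [pPair, qPair, List.foldl_cons, mcfStep, mul_one, mul_zero, zero_add, add_zero]
    rw [ih c (hd.1 * c + hd.2 * b), ih 0 hd.2, ih 1 hd.1]
    simp only [Prod.mk.injEq]
    constructor <;> ring

lemma pPair_cons (a ε : ℤ) (t : List (ℤ × ℤ)) :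
    pPair ((a, ε) :: t) = (ε * mcfq' t, ε * mcfq t) := by
  simp only [pPair, List.foldl_cons, mcfStep, mul_zero, mul_one, zero_add]
  rw [foldl_mcfStep]
  simp [mcfq, mcfq']

lemma qPair_cons (a ε : ℤ) (t : List (ℤ × ℤ)) :
    qPair ((a, ε) :: t) = (mcfp' t + a * mcfq' t, mcfp t + a * mcfq t) := by
  simp only [qPair, List.foldl_cons, mcfStep, mul_zero, mul_one, zero_add, add_zero]
  rw [foldl_mcfStep]
  simp [mcfp, mcfp', mcfq, mcfq', mul_comm]

lemma sig_cons (a ε : ℤ) (t : List (ℤ × ℤ)) : sig ((a, ε) :: t) = -ε * sig t := by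
  simp only [sig, List.length_cons, List.map_cons, List.prod_cons, pow_succ]
  ring

lemma muNum_cons (a ε : ℤ) (t : List (ℤ × ℤ)) (z : ℂ) :
    muNum ((a, ε) :: t) z = (ε : ℂ) * muDen t (-(ε : ℂ) * z) := by
  simp only [muNum, muDen, mcfp, mcfp', mcfq, mcfq', pPair_cons, sig_cons]
  push_cast
  ring

lemma muDen_cons (a ε : ℤ) (t : List (ℤ × ℤ)) (z : ℂ) :
    muDen ((a, ε) :: t) z = (a : ℂ) * muDen t (-(ε : ℂ) * z) + muNum t (-(ε : ℂ) * z) := by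
  simp only [muNum, muDen, mcfq, mcfq', qPair_cons, sig_cons]
  push_cast
  ring

lemma arctan_le_self' {x : ℝ} (hx : 0 ≤ x) : Real.arctan x ≤ x := by
  rcases eq_or_lt_of_le hx with h | h
  · simp [← h, Real.arctan_zero]
  · have h1 : 0 < Real.arctan x := by
      rw [← Real.arctan_zero]; exact Real.arctan_strictMono h
    have h2 := Real.lt_tan h1 (Real.arctan_lt_pi_div_two x)
    rw [Real.tan_arctan] at h2
    exact h2.le

lemma abs_arctan_le (x : ℝ) : |Real.arctan x| ≤ |x| := by
  rcases le_or_gt 0 x with h | h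
  · have h1 : 0 ≤ Real.arctan x := by
      rw [← Real.arctan_zero]; exact Real.arctan_strictMono.monotone h
    rw [abs_of_nonneg h1, abs_of_nonneg h]
    exact arctan_le_self' h
  · have h1 : Real.arctan x ≤ 0 := by
      rw [← Real.arctan_zero]; exact (Real.arctan_strictMono h).le
    rw [abs_of_nonpos h1, abs_of_nonpos h.le, ← Real.arctan_neg]
    exact arctan_le_self' (by linarith)

lemma key (ω : List (ℤ × ℤ)) : IsMCF ω → ∀ z : ℂ, ‖z‖ ≤ 1 →
    muDen ω z ≠ 0 ∧ ‖mu ω z‖ ≤ 1 ∧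
      (∀ a ε t, ω = (a, ε) :: t → mu ω z = (ε : ℂ) / ((a : ℂ) + mu t (-(ε:ℂ) * z))) := by
  induction ω with
  | nil =>
    intro _ z hz
    refine ⟨?_, ?_, by simp⟩
    · simp [muDen, mcfq, mcfq', qPair, sig]
    · have : mu [] z = z := by
        simp [mu, mcfp, mcfp', mcfq, mcfq', pPair, qPair, sig]
      rwa [this]
  | cons hd tl ih =>
    obtain ⟨a, ε⟩ := hd
    intro h z hz
    have hmem := h (a, ε) List.mem_cons_self
    have ha : (2:ℤ) ≤ a := hmem.1
    have haR : (2:ℝ) ≤ (a:ℝ) := by exact_mod_cast ha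
    have hε : ‖(ε : ℂ)‖ = 1 := by
      rcases hmem.2 with h' | h' <;> · rw [show ε = _ from h']; simp
    have hz' : ‖-(ε:ℂ) * z‖ ≤ 1 := by
      rw [norm_mul, norm_neg, hε, one_mul]; exact hz
    have ht : IsMCF tl := fun u hu => h u (List.mem_cons_of_mem _ hu)
    obtain ⟨hD, hw, -⟩ := ih ht (-(ε:ℂ) * z) hz'
    set w := mu tl (-(ε:ℂ) * z) with hwdef
    have hre : (a:ℝ) - 1 ≤ ((a:ℂ) + w).re := by
      have h1 : |w.re| ≤ ‖w‖ := Complex.abs_re_le_norm w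
      have h2 : -(1:ℝ) ≤ w.re := by
        have := neg_abs_le w.re; linarith
      simp only [Complex.add_re, Complex.intCast_re]
      linarith
    have haw : (a:ℝ) - 1 ≤ ‖(a:ℂ) + w‖ :=
      le_trans hre (le_trans (le_abs_self _) (Complex.abs_re_le_norm _))
    have hane : (a:ℂ) + w ≠ 0 := by
      intro h0
      rw [h0] at hre
      simp at hre; linarith
    have hN : muNum tl (-(ε:ℂ) * z) = w * muDen tl (-(ε:ℂ) * z) := by
      rw [hwdef, mu_eq, div_mul_cancel₀ _ hD]
    have hDen : muDen ((a, ε) :: tl) z = ((a:ℂ) + w) * muDen tl (-(ε:ℂ) * z) := by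
      rw [muDen_cons, hN]; ring
    have hmu : mu ((a, ε) :: tl) z = (ε : ℂ) / ((a:ℂ) + w) := by
      rw [mu_eq, muNum_cons, hDen, mul_div_mul_right _ _ hD]
    refine ⟨?_, ?_, ?_⟩
    · rw [hDen]; exact mul_ne_zero hane hD
    · rw [hmu, norm_div, hε]
      rw [div_le_one (lt_of_lt_of_le (by linarith) haw)]
      calc (1:ℝ) ≤ (a:ℝ) - 1 := by linarith
        _ ≤ _ := haw
    · rintro a' ε' t' heq
      injection heq with h1 h2
      rw [Prod.mk.injEq] at h1
      obtain ⟨rfl, rfl⟩ := h1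
      subst h2
      exact hmu

/-- for `|z| ≤ 1`, both `|μ_ω(z)|` and `|arg(ε₁ μ_ω(z))|` are at most
`1/(a₁ - 1)`. -/
theorem mu_geometry (a₁ ε₁ : ℤ) (t : List (ℤ × ℤ)) (hω : IsMCF ((a₁, ε₁) :: t))
    (z : ℂ) (hz : ‖z‖ ≤ 1) :
    ‖mu ((a₁, ε₁) :: t) z‖ ≤ 1 / ((a₁ : ℝ) - 1) ∧
    |Complex.arg ((ε₁ : ℂ) * mu ((a₁, ε₁) :: t) z)| ≤ 1 / ((a₁ : ℝ) - 1) := by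
  have hmem := hω (a₁, ε₁) List.mem_cons_self
  have ha : (2:ℤ) ≤ a₁ := hmem.1
  have haR : (2:ℝ) ≤ (a₁:ℝ) := by exact_mod_cast ha
  have hε : ‖(ε₁ : ℂ)‖ = 1 := by
    rcases hmem.2 with h' | h' <;> · rw [show ε₁ = _ from h']; simp
  have hεsq : (ε₁:ℂ) * (ε₁:ℂ) = 1 := by
    rcases hmem.2 with h' | h' <;> · rw [show ε₁ = _ from h']; norm_num
  obtain ⟨-, -, hform⟩ := key _ hω z hz
  have hmu := hform a₁ ε₁ t rfl
  have hz' : ‖-(ε₁:ℂ) * z‖ ≤ 1 := by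
    rw [norm_mul, norm_neg, hε, one_mul]; exact hz
  have ht : IsMCF t := fun u hu => hω u (List.mem_cons_of_mem _ hu)
  obtain ⟨-, hw, -⟩ := key t ht (-(ε₁:ℂ) * z) hz'
  set w := mu t (-(ε₁:ℂ) * z) with hwdef
  set x := (a₁:ℂ) + w with hxdef
  have hre : (a₁:ℝ) - 1 ≤ x.re := by
    have h1 : |w.re| ≤ ‖w‖ := Complex.abs_re_le_norm w
    have h2 : -(1:ℝ) ≤ w.re := by have := neg_abs_le w.re; linarith
    simp only [hxdef, Complex.add_re, Complex.intCast_re]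
    linarith
  have hrepos : 0 < x.re := by linarith
  have haw : (a₁:ℝ) - 1 ≤ ‖x‖ :=
    le_trans hre (le_trans (le_abs_self _) (Complex.abs_re_le_norm _))
  constructor
  · rw [hmu, norm_div, hε]
    exact one_div_le_one_div_of_le (by linarith) haw
  · have hx1 : (ε₁:ℂ) * mu ((a₁, ε₁) :: t) z = x⁻¹ := by
      rw [hmu, ← mul_div_assoc, hεsq, one_div]
    have hlt : |Complex.arg x| < Real.pi / 2 :=
      Complex.abs_arg_lt_pi_div_two_iff.2 (Or.inl hrepos)
    have hargne : Complex.arg x ≠ Real.pi := by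
      intro hp
      rw [hp, abs_of_pos Real.pi_pos] at hlt
      linarith [Real.pi_pos]
    rw [hx1, Complex.arg_inv, if_neg hargne, abs_neg]
    have harg : Complex.arg x = Real.arctan (x.im / x.re) := by
      rw [← Complex.tan_arg,
        Real.arctan_tan (by linarith [(abs_lt.mp hlt).1]) (abs_lt.mp hlt).2]
    rw [harg]
    refine le_trans (abs_arctan_le _) ?_
    rw [abs_div, abs_of_pos hrepos]
    have him : |x.im| ≤ 1 := by
      have h1 : x.im = w.im := by
        simp [hxdef, Complex.add_im]
      have h2 : |w.im| ≤ ‖w‖ := Complex.abs_im_le_norm w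
      rw [h1]; linarith
    rw [div_le_div_iff₀ hrepos (by linarith : (0:ℝ) < (a₁:ℝ) - 1)]
    nlinarith [abs_nonneg x.im]
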